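/- Let P be a poset in which every closed interval is finite and let ~ be an equivalence relation on Int(P) satisfying Axioms 1-4 (order-compatibility, invariance, finiteness, concatenation). Fix a class α in Int(P)/~ with representative interval [x(α),y(α)], and fix i ≥ 1. Then the map φ_α sending a length-i multichain x(α) = x_0 ≤ x_1 ≤ ⋯ ≤ x_i = y(α) to the i-tuple of classes ([x_0,x_1]~, [x_1,x_2]~, …, [x_{i-1},x_i]~) is a bijection from the set of all length-i multichains in [x(α),y(α)] from x(α) to y(α) onto the set of all i-tuples (α_1,…,α_i) of classes satisfying t(α_{j-1}) = s(α_j) for 1 ≤ j ≤ i+1 (with the conventions α_0 := s(α), α_{i+1} := t(α)) and ξ_{α_1}⋯ξ_{α_i} = ξ_α in k[P]_red. -/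

import Mathlib

noncomputable section
/-! ### Posets, intervals, and equivalence relations on intervals -/

/-- The set of closed intervals `[x, y]` of a poset `P`, encoded as pairs `x ≤ y`. -/
abbrev IntP (P : Type) [PartialOrder P] : Type := {p : P × P // p.1 ≤ p.2}

/-- The closed interval `[x, y]` as an element of `IntP P`. -/
def itv {P : Type} [PartialOrder P] (x y : P) (h : x ≤ y) : IntP P := ⟨(x, y), h⟩

section PosetRel

variable {P : Type} [PartialOrder P]

/-- The interval map `int_{[x,y]}` sending `z ∈ [x, y]` to the pair of `∼`-classes
`([x,z]∼, [z,y]∼)`. -/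
def intMap (S : Setoid (IntP P)) {x y : P} (z : Set.Icc x y) :
    Quotient S × Quotient S :=
  (Quotient.mk S (itv x (z : P) z.2.1), Quotient.mk S (itv (z : P) y z.2.2))

/-- Axiom 1 (order-compatibility): if `[x,y] ∼ [x',y']` and `[y,z] ∼ [y',z']`
then `[x,z] ∼ [x',z']`. -/
def Ax1 (S : Setoid (IntP P)) : Prop :=
  ∀ (x y z x' y' z' : P) (hxy : x ≤ y) (hyz : y ≤ z) (hxy' : x' ≤ y') (hyz' : y' ≤ z'),
    S.r (itv x y hxy) (itv x' y' hxy') → S.r (itv y z hyz) (itv y' z' hyz') →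
    S.r (itv x z (hxy.trans hyz)) (itv x' z' (hxy'.trans hyz'))

/-- Axiom 2, part (a) (invariance, existence): whenever `[x,y] ∼ [x',y']` there is a
map `τ : [x,y] → [x',y']` commuting with the interval maps. -/
def Ax2a (S : Setoid (IntP P)) : Prop :=
  ∀ (x y x' y' : P) (h : x ≤ y) (h' : x' ≤ y'),
    S.r (itv x y h) (itv x' y' h') →
    ∃ τ : Set.Icc x y → Set.Icc x' y', ∀ z, intMap S (τ z) = intMap S z

/-- Axiom 2 (invariance, existence and uniqueness): whenever `[x,y] ∼ [x',y']` there is a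
unique map `τ : [x,y] → [x',y']` commuting with the interval maps. -/
def Ax2 (S : Setoid (IntP P)) : Prop :=
  ∀ (x y x' y' : P) (h : x ≤ y) (h' : x' ≤ y'),
    S.r (itv x y h) (itv x' y' h') →
    ∃! τ : Set.Icc x y → Set.Icc x' y', ∀ z, intMap S (τ z) = intMap S z

/-- The class of the one-point interval `[x,x]`. -/
def diagCl (S : Setoid (IntP P)) (x : P) : Quotient S := Quotient.mk S (itv x x le_rfl)

/-- The diagonal classes, i.e. classes of one-point intervals. -/
def IsDiag (S : Setoid (IntP P)) (α : Quotient S) : Prop := ∃ x : P, α = diagCl S x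

/-- Axiom 3 (finiteness): the induced equivalence relation on points
(`x ∼ y` iff `[x,x] ∼ [y,y]`) has only finitely many classes. -/
def Ax3 (S : Setoid (IntP P)) : Prop := {α : Quotient S | IsDiag S α}.Finite

/-- Axiom 4 (concatenation): if `x ≤ y₁` and `y₂ ≤ z` with `y₁ ∼ y₂`, then there are
`x' ≤ y' ≤ z'` with `[x',y'] ∼ [x,y₁]` and `[y',z'] ∼ [y₂,z]`. -/
def Ax4 (S : Setoid (IntP P)) : Prop :=
  ∀ (x y₁ y₂ z : P) (h1 : x ≤ y₁) (h2 : y₂ ≤ z),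
    S.r (itv y₁ y₁ le_rfl) (itv y₂ y₂ le_rfl) →
    ∃ (x' y' z' : P) (hxy : x' ≤ y') (hyz : y' ≤ z'),
      S.r (itv x' y' hxy) (itv x y₁ h1) ∧ S.r (itv y' z' hyz) (itv y₂ z h2)

/-- The source of a class `α = [x,y]∼`, namely the diagonal class `[x,x]∼`
(well defined under Axioms 1 and 2; here defined via a chosen representative). -/
noncomputable def sclP (S : Setoid (IntP P)) (α : Quotient S) : Quotient S :=
  diagCl S α.out.val.1

/-- The target of a class `α = [x,y]∼`, namely the diagonal class `[y,y]∼`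
(well defined under Axioms 1 and 2; here defined via a chosen representative). -/
noncomputable def tclP (S : Setoid (IntP P)) (α : Quotient S) : Quotient S :=
  diagCl S α.out.val.2

/-- The length of the interval `[x, y]`: the length of a longest chain from `x` to `y`. -/
noncomputable def intLen (x y : P) : ℕ :=
  sSup {n | ∃ c : Finset P, (c : Set P) ⊆ Set.Icc x y ∧ IsChain (· ≤ ·) (c : Set P) ∧
    x ∈ c ∧ y ∈ c ∧ c.card = n + 1}

/-- The length of a class of intervals (via a chosen representative; well defined
under Axioms 1 and 2). -/
noncomputable def lenCl (S : Setoid (IntP P)) (α : Quotient S) : ℕ :=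
  intLen α.out.val.1 α.out.val.2

/-- The multiplication rule of the reduced incidence algebra `k[P]_red`, for a family
`ξ` of elements indexed by `Int(P)/∼` (in the intended application, a basis):
`ξ_{[x,y]∼} ξ_{[z,w]∼} = ξ_{[x',w']∼}` if there exist `x' ≤ y' ≤ w'` with
`[x',y'] ∼ [x,y]` and `[y',w'] ∼ [z,w]`, and `0` otherwise. -/
def MulRuleA {A : Type} [Ring A] (S : Setoid (IntP P)) (ξ : Quotient S → A) : Prop :=
  ∀ α β : Quotient S,
    (∀ (x y w : P) (h1 : x ≤ y) (h2 : y ≤ w),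
        α = Quotient.mk S (itv x y h1) → β = Quotient.mk S (itv y w h2) →
        ξ α * ξ β = ξ (Quotient.mk S (itv x w (h1.trans h2)))) ∧
    ((¬ ∃ (x y w : P) (h1 : x ≤ y) (h2 : y ≤ w),
        α = Quotient.mk S (itv x y h1) ∧ β = Quotient.mk S (itv y w h2)) →
      ξ α * ξ β = 0)

/-- The multiplication rule of the associated graded ring `gr_I k[P]_red`, for a family
`ξ` of elements indexed by `Int(P)/∼` (in the intended application, a basis):
as for `k[P]_red`, but with the additional requirement that lengths add up. -/
def MulRuleR {A : Type} [Ring A] (S : Setoid (IntP P)) (ξ : Quotient S → A) : Prop :=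
  ∀ α β : Quotient S,
    (∀ (x y w : P) (h1 : x ≤ y) (h2 : y ≤ w),
        α = Quotient.mk S (itv x y h1) → β = Quotient.mk S (itv y w h2) →
        intLen x w = intLen x y + intLen y w →
        ξ α * ξ β = ξ (Quotient.mk S (itv x w (h1.trans h2)))) ∧
    ((¬ ∃ (x y w : P) (h1 : x ≤ y) (h2 : y ≤ w),
        α = Quotient.mk S (itv x y h1) ∧ β = Quotient.mk S (itv y w h2) ∧
        intLen x w = intLen x y + intLen y w) →
      ξ α * ξ β = 0)

/-- The poset `(x, y)|_J`: elements `z` of the open interval `(x, y)` such that the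
class of `[x, z]` lies in the monomial ideal (set of classes) `J`. -/
def subJ (S : Setoid (IntP P)) (Jset : Set (Quotient S)) (x y : P) : Set P :=
  {z : P | ∃ hz : x < z ∧ z < y, Quotient.mk S (itv x z hz.1.le) ∈ Jset}

end PosetRel

/-! ### Auxiliary lemmas for Statement 10 -/

namespace Aux10

variable {P : Type} [PartialOrder P]

lemma itv_eq {a b a' b' : P} (ha : a = a') (hb : b = b') {h : a ≤ b} {h' : a' ≤ b'} :
    itv a b h = itv a' b' h' := by subst ha; subst hb; rfl

lemma mk_itv_eq (S : Setoid (IntP P)) {a b a' b' : P} (ha : a = a') (hb : b = b')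
    {h : a ≤ b} {h' : a' ≤ b'} :
    Quotient.mk S (itv a b h) = Quotient.mk S (itv a' b' h') := by
  rw [itv_eq ha hb (h' := h')]

/-- If a one-point interval is related to `[a,b]` then `a = b`. -/
lemma eq_of_rel_diag (S : Setoid (IntP P)) (hax2 : Ax2 S) {x a b : P} (hab : a ≤ b)
    (hr : S.r (itv x x le_rfl) (itv a b hab)) : a = b := by
  obtain ⟨ρ, hρ, -⟩ := hax2 x x a b le_rfl hab hr
  obtain ⟨σ, hσ, -⟩ := hax2 a b x x hab le_rfl (S.iseqv.symm hr)
  obtain ⟨τ₀, -, hu⟩ := hax2 a b a b hab hab (S.iseqv.refl _)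
  have h1 : (fun z => ρ (σ z)) = τ₀ := hu _ (fun z => by rw [hρ, hσ])
  have h2 : (fun z : Set.Icc a b => z) = τ₀ := hu _ (fun z => rfl)
  have hid : ∀ z : Set.Icc a b, ρ (σ z) = z := fun z =>
    congrFun (h1.trans h2.symm) z
  have hsub : ∀ u v : (Set.Icc x x : Set P), u = v := by
    rintro ⟨u, hu1, hu2⟩ ⟨v, hv1, hv2⟩
    exact Subtype.ext ((le_antisymm hu2 hu1).trans (le_antisymm hv1 hv2))
  have hmem_a : a ∈ Set.Icc a b := ⟨le_rfl, hab⟩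
  have hmem_b : b ∈ Set.Icc a b := ⟨hab, le_rfl⟩
  have : (⟨a, hmem_a⟩ : Set.Icc a b) = ⟨b, hmem_b⟩ := by
    rw [← hid ⟨a, hmem_a⟩, ← hid ⟨b, hmem_b⟩, hsub (σ ⟨a, hmem_a⟩) (σ ⟨b, hmem_b⟩)]
  exact congrArg Subtype.val this

/-- The map `int_{[x,y]}` is injective. -/
lemma intMap_injective (S : Setoid (IntP P)) (hax2 : Ax2 S) {x y : P} (h : x ≤ y)
    {z z' : Set.Icc x y} (hzz : intMap S z = intMap S z') : z = z' := by
  classical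
  obtain ⟨τ₀, -, hu⟩ := hax2 x y x y h h (S.iseqv.refl _)
  have hswap : ∀ w : Set.Icc x y,
      intMap S (if w = z then z' else if w = z' then z else w) = intMap S w := by
    intro w
    split_ifs with hw1 hw2
    · rw [hw1, hzz]
    · rw [hw2, hzz]
    · rfl
  have h1 : (fun w : Set.Icc x y => if w = z then z' else if w = z' then z else w) = τ₀ :=
    hu _ hswap
  have h2 : (fun w : Set.Icc x y => w) = τ₀ := hu _ (fun _ => rfl)
  have hz := congrFun (h1.trans h2.symm) z
  simpa using hz.symm

/-- Equivalent intervals have equivalent left and right endpoints. -/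
lemma rel_diag_of_rel (S : Setoid (IntP P)) (hax2 : Ax2 S) {x y x' y' : P}
    (h : x ≤ y) (h' : x' ≤ y') (hr : S.r (itv x y h) (itv x' y' h')) :
    S.r (itv x x le_rfl) (itv x' x' le_rfl) ∧
      S.r (itv y y le_rfl) (itv y' y' le_rfl) := by
  obtain ⟨τ, hτ, -⟩ := hax2 x y x' y' h h' hr
  constructor
  · set zx : Set.Icc x y := ⟨x, le_rfl, h⟩ with hzx
    set u := τ zx with hud
    have e1 : Quotient.mk S (itv x' (u : P) u.2.1) = Quotient.mk S (itv x x le_rfl) :=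
      congrArg Prod.fst (hτ zx)
    have e1' : S.r (itv x' (u : P) u.2.1) (itv x x le_rfl) := Quotient.exact e1
    have hx'u : x' = (u : P) := eq_of_rel_diag S hax2 u.2.1 (S.iseqv.symm e1')
    have : itv x' (u : P) u.2.1 = itv x' x' le_rfl := itv_eq rfl hx'u.symm
    rw [this] at e1'
    exact S.iseqv.symm e1'
  · set zy : Set.Icc x y := ⟨y, h, le_rfl⟩ with hzy
    set v := τ zy with hvd
    have e2 : Quotient.mk S (itv (v : P) y' v.2.2) = Quotient.mk S (itv y y le_rfl) :=
      congrArg Prod.snd (hτ zy)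
    have e2' : S.r (itv (v : P) y' v.2.2) (itv y y le_rfl) := Quotient.exact e2
    have hvy' : (v : P) = y' := eq_of_rel_diag S hax2 v.2.2 (S.iseqv.symm e2')
    have : itv (v : P) y' v.2.2 = itv y' y' le_rfl := itv_eq hvy' rfl
    rw [this] at e2'
    exact S.iseqv.symm e2'

lemma sclP_mk (S : Setoid (IntP P)) (hax2 : Ax2 S) {x y : P} (h : x ≤ y) :
    sclP S (Quotient.mk S (itv x y h)) = diagCl S x := by
  have hrel : S.r (Quotient.mk S (itv x y h)).out (itv x y h) :=
    Quotient.exact (Quotient.out_eq _)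
  exact Quotient.sound (rel_diag_of_rel S hax2 _ h hrel).1

lemma tclP_mk (S : Setoid (IntP P)) (hax2 : Ax2 S) {x y : P} (h : x ≤ y) :
    tclP S (Quotient.mk S (itv x y h)) = diagCl S y := by
  have hrel : S.r (Quotient.mk S (itv x y h)).out (itv x y h) :=
    Quotient.exact (Quotient.out_eq _)
  exact Quotient.sound (rel_diag_of_rel S hax2 _ h hrel).2

/-- `m` realizes the classes `tt 0, …, tt (j-1)` as a multichain from `a` to `b`. -/
def ChRe (S : Setoid (IntP P)) (tt : ℕ → Quotient S) (j : ℕ) (a b : P) : Prop :=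
  ∃ m : ℕ → P, m 0 = a ∧ m j = b ∧
    ∀ l, l < j → ∃ h : m l ≤ m (l + 1), Quotient.mk S (itv (m l) (m (l + 1)) h) = tt l

lemma chain_mono_aux {m : ℕ → P} {j : ℕ} (hm : ∀ l, l < j → m l ≤ m (l + 1)) :
    ∀ d p, p + d ≤ j → m p ≤ m (p + d) := by
  intro d
  induction d with
  | zero => intro p _; exact le_rfl
  | succ d ih =>
    intro p hp
    exact (ih p (by omega)).trans (hm (p + d) (by omega))

lemma chain_mono {m : ℕ → P} {j : ℕ} (hm : ∀ l, l < j → m l ≤ m (l + 1))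
    {p q : ℕ} (hpq : p ≤ q) (hqj : q ≤ j) : m p ≤ m q := by
  have := chain_mono_aux hm (q - p) p (by omega)
  rwa [Nat.add_sub_cancel' hpq] at this

/-- Transport of realizing multichains along interval equivalence. -/
lemma transport (S : Setoid (IntP P)) (hax2 : Ax2 S) :
    ∀ (j : ℕ) (tt : ℕ → Quotient S) (a b a' b' : P) (hab : a ≤ b) (hab' : a' ≤ b'),
      S.r (itv a b hab) (itv a' b' hab') → ChRe S tt j a b → ChRe S tt j a' b' := by
  intro j
  induction j with
  | zero =>
    intro tt a b a' b' hab hab' hr hch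
    obtain ⟨m, hm0, hmj, -⟩ := hch
    have hab0 : a = b := by rw [← hm0, ← hmj]
    subst hab0
    have hab' : a' = b' := eq_of_rel_diag S hax2 hab' hr
    subst hab'
    exact ⟨fun _ => a', rfl, rfl, fun l hl => absurd hl (by omega)⟩
  | succ j ih =>
    intro tt a b a' b' hab hab' hr hch
    obtain ⟨m, hm0, hmj, hcl⟩ := hch
    have hsteps : ∀ l, l < j + 1 → m l ≤ m (l + 1) := fun l hl => (hcl l hl).1
    have hac : a ≤ m 1 := by rw [← hm0]; exact hsteps 0 (by omega)
    have hcb : m 1 ≤ b := by rw [← hmj]; exact chain_mono hsteps (by omega) le_rfl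
    obtain ⟨τ, hτ, -⟩ := hax2 a b a' b' hab hab' hr
    set z : Set.Icc a b := ⟨m 1, hac, hcb⟩ with hz
    set u := τ z with hud
    have hfst : Quotient.mk S (itv a' (u : P) u.2.1) = Quotient.mk S (itv a (m 1) hac) :=
      congrArg Prod.fst (hτ z)
    have hsnd : Quotient.mk S (itv (u : P) b' u.2.2) = Quotient.mk S (itv (m 1) b hcb) :=
      congrArg Prod.snd (hτ z)
    have hrtail : S.r (itv (m 1) b hcb) (itv (u : P) b' u.2.2) :=
      S.iseqv.symm (Quotient.exact hsnd)
    have hchtail : ChRe S (fun l => tt (l + 1)) j (m 1) b :=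
      ⟨fun l => m (l + 1), rfl, hmj, fun l hl => hcl (l + 1) (by omega)⟩
    obtain ⟨w, hw0, hwj, hwcl⟩ :=
      ih (fun l => tt (l + 1)) (m 1) b (u : P) b' hcb u.2.2 hrtail hchtail
    refine ⟨fun l => Nat.casesOn l a' (fun l' => w l'), rfl, hwj, ?_⟩
    intro l hl
    cases l with
    | zero =>
      have hclass0 : Quotient.mk S (itv a (m 1) hac) = tt 0 := by
        obtain ⟨h0, hc0⟩ := hcl 0 (by omega)
        rw [← hc0]
        exact mk_itv_eq S hm0.symm rfl
      have ha'w0 : a' ≤ w 0 := by rw [hw0]; exact u.2.1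
      refine ⟨ha'w0, ?_⟩
      calc Quotient.mk S (itv a' (w 0) ha'w0)
          = Quotient.mk S (itv a' (u : P) u.2.1) := mk_itv_eq S rfl hw0
        _ = Quotient.mk S (itv a (m 1) hac) := hfst
        _ = tt 0 := hclass0
    | succ l' =>
      exact hwcl l' (by omega)

/-- Partial products. -/
def prodTo {A : Type} [Ring A] (g : ℕ → A) : ℕ → A
  | 0 => 1
  | (j + 1) => prodTo g j * g j

lemma ofFn_prod_eq_prodTo {A : Type} [Ring A] (g : ℕ → A) (n : ℕ) :
    (List.ofFn fun j : Fin n => g j.val).prod = prodTo g n := by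
  induction n with
  | zero => simp [prodTo]
  | succ n ih =>
    rw [List.ofFn_succ', List.prod_concat]
    show (List.ofFn fun j : Fin n => g j.val).prod * g n = prodTo g (n + 1)
    rw [ih]; rfl

/-- Forward direction: the product of the classes of the pieces of a multichain is
the class of the whole interval. -/
lemma prodTo_chain (S : Setoid (IntP P)) {A : Type} [Ring A] (ξ : Quotient S → A)
    (hrule : MulRuleA S ξ) {n : ℕ → P} (hmono : Monotone n) :
    ∀ j, 1 ≤ j →
      prodTo (fun l => ξ (Quotient.mk S (itv (n l) (n (l + 1)) (hmono (Nat.le_succ l))))) j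
        = ξ (Quotient.mk S (itv (n 0) (n j) (hmono (Nat.zero_le j)))) := by
  intro j
  induction j with
  | zero => intro h; omega
  | succ j ih =>
    intro _
    by_cases hj : 1 ≤ j
    · show prodTo _ j * ξ (Quotient.mk S (itv (n j) (n (j + 1)) _)) = _
      rw [ih hj]
      exact (hrule _ _).1 (n 0) (n j) (n (j + 1)) (hmono (Nat.zero_le j))
        (hmono (Nat.le_succ j)) rfl rfl
    · have hj0 : j = 0 := by omega
      subst hj0
      show (1 : A) * ξ (Quotient.mk S (itv (n 0) (n 1) _)) = _
      rw [one_mul]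

/-- Surjectivity workhorse: a product of basis classes is `0` or is realized by a
multichain. -/
lemma surj_aux (S : Setoid (IntP P)) (hax2 : Ax2 S) {A : Type} [Ring A]
    (ξ : Quotient S → A) (hrule : MulRuleA S ξ) (tt : ℕ → Quotient S) :
    ∀ j, 1 ≤ j → (prodTo (fun l => ξ (tt l)) j = 0 ∨
      ∃ (a b : P) (hab : a ≤ b), ChRe S tt j a b ∧
        prodTo (fun l => ξ (tt l)) j = ξ (Quotient.mk S (itv a b hab))) := by
  intro j
  induction j with
  | zero => intro h; omega
  | succ j ih =>
    intro _
    by_cases hj : 1 ≤ j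
    · rcases ih hj with h0 | ⟨a, b, hab, hch, hpe⟩
      · left
        show prodTo _ j * ξ (tt j) = 0
        rw [h0, zero_mul]
      · by_cases hex : ∃ (x y w : P) (h1 : x ≤ y) (h2 : y ≤ w),
            Quotient.mk S (itv a b hab) = Quotient.mk S (itv x y h1) ∧
            tt j = Quotient.mk S (itv y w h2)
        · obtain ⟨x, y, w, h1, h2, he1, he2⟩ := hex
          right
          refine ⟨x, w, h1.trans h2, ?_, ?_⟩
          · have hch' : ChRe S tt j x y :=
              transport S hax2 j tt a b x y hab h1 (Quotient.exact he1) hch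
            obtain ⟨m, hm0, hmj, hcl⟩ := hch'
            refine ⟨fun l => if l ≤ j then m l else w, by show (if 0 ≤ j then m 0 else w) = x; rw [if_pos (Nat.zero_le j)]; exact hm0, by show (if j + 1 ≤ j then m (j+1) else w) = w; rw [if_neg (by omega : ¬ j + 1 ≤ j)], ?_⟩
            intro l hl
            by_cases hlj : l < j
            · simp only [if_pos (show l ≤ j by omega), if_pos (show l + 1 ≤ j by omega)]
              exact hcl l hlj
            · have hlj' : l = j := by omega
              subst hlj'
              simp only [if_pos (le_refl l), if_neg (show ¬ l + 1 ≤ l by omega)]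
              have hmy : m l ≤ w := by rw [hmj]; exact h2
              refine ⟨hmy, ?_⟩
              rw [he2]
              exact mk_itv_eq S hmj rfl
          · show prodTo _ j * ξ (tt j) = _
            rw [hpe]
            exact (hrule _ _).1 x y w h1 h2 he1 he2
        · left
          show prodTo _ j * ξ (tt j) = 0
          rw [hpe]
          exact (hrule _ _).2 hex
    · have hj0 : j = 0 := by omega
      subst hj0
      right
      refine ⟨(tt 0).out.val.1, (tt 0).out.val.2, (tt 0).out.2, ?_, ?_⟩
      · refine ⟨fun l => Nat.casesOn l (tt 0).out.val.1 (fun _ => (tt 0).out.val.2),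
          rfl, rfl, ?_⟩
        intro l hl
        have hl0 : l = 0 := by omega
        subst hl0
        exact ⟨(tt 0).out.2, Quotient.out_eq _⟩
      · show (1 : A) * ξ (tt 0) = _
        rw [one_mul]; exact congrArg ξ (Quotient.out_eq (tt 0)).symm

/-- The map `φ` sending a multichain to its tuple of classes. -/
def phi (S : Setoid (IntP P)) {i : ℕ} (xa ya : P)
    (m : {m : Fin (i + 1) → P // Monotone m ∧ m 0 = xa ∧ m (Fin.last i) = ya}) :
    Fin i → Quotient S := fun j =>
  Quotient.mk S (itv (m.val j.castSucc) (m.val j.succ) (m.2.1 (Fin.castSucc_lt_succ (i := j)).le))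

lemma ofFn_prod_chain (S : Setoid (IntP P)) {A : Type} [Ring A] (ξ : Quotient S → A)
    (hrule : MulRuleA S ξ) {n : ℕ → P} (hmono : Monotone n) {i : ℕ} (hi : 1 ≤ i)
    (f : Fin i → Quotient S)
    (hf : ∀ j : Fin i,
      f j = Quotient.mk S (itv (n j.val) (n (j.val + 1)) (hmono (Nat.le_succ j.val))))
    (a b : P) (hab : a ≤ b) (ha : n 0 = a) (hb : n i = b) :
    (List.ofFn fun j : Fin i => ξ (f j)).prod = ξ (Quotient.mk S (itv a b hab)) := by
  have h1 : (fun j : Fin i => ξ (f j)) =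
      fun j : Fin i =>
        (fun l => ξ (Quotient.mk S (itv (n l) (n (l + 1)) (hmono (Nat.le_succ l))))) j.val := by
    funext j
    rw [hf j]
  rw [h1]
  refine ((ofFn_prod_eq_prodTo _ i).trans ((prodTo_chain S ξ hrule hmono i hi).trans ?_))
  exact congrArg ξ (mk_itv_eq S ha hb)

lemma phi_prod (S : Setoid (IntP P)) {A : Type} [Ring A] (ξ : Quotient S → A)
    (hrule : MulRuleA S ξ) {i : ℕ} (hi : 1 ≤ i) (xa ya : P) (hxy : xa ≤ ya)
    (m : {m : Fin (i + 1) → P // Monotone m ∧ m 0 = xa ∧ m (Fin.last i) = ya}) :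
    (List.ofFn fun j : Fin i => ξ (phi S xa ya m j)).prod
      = ξ (Quotient.mk S (itv xa ya hxy)) := by
  have hmono : Monotone
      (fun l : ℕ => m.val ⟨min l i, Nat.lt_succ_of_le (min_le_right l i)⟩) := by
    intro p q hpq
    exact m.2.1 (Fin.mk_le_mk.mpr (by omega))
  refine ofFn_prod_chain S ξ hrule hmono hi _ ?_ xa ya hxy ?_ ?_
  · intro j
    refine mk_itv_eq S ?_ ?_
    · exact congrArg m.val (Fin.ext (by have := j.isLt; simp only [Fin.coe_castSucc]; omega))
    · exact congrArg m.val (Fin.ext (by have := j.isLt; simp only [Fin.val_succ]; omega))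
  · show m.val ⟨min 0 i, _⟩ = xa
    rw [show (⟨min 0 i, Nat.lt_succ_of_le (min_le_right 0 i)⟩ : Fin (i + 1)) = 0 from
      Fin.ext (by simp)]
    exact m.2.2.1
  · show m.val ⟨min i i, _⟩ = ya
    rw [show (⟨min i i, Nat.lt_succ_of_le (min_le_right i i)⟩ : Fin (i + 1)) = Fin.last i from
      Fin.ext (by simp)]
    exact m.2.2.2

lemma phi_mem (S : Setoid (IntP P)) (hax2 : Ax2 S) {A : Type} [Ring A]
    (ξ : Quotient S → A) (hrule : MulRuleA S ξ) {i : ℕ} (hi : 1 ≤ i)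
    (xa ya : P) (hxy : xa ≤ ya)
    (m : {m : Fin (i + 1) → P // Monotone m ∧ m 0 = xa ∧ m (Fin.last i) = ya}) :
    (∀ j₁ j₂ : Fin i, (j₁ : ℕ) + 1 = (j₂ : ℕ) →
        tclP S (phi S xa ya m j₁) = sclP S (phi S xa ya m j₂)) ∧
    (∀ _ : 0 < i,
        sclP S (phi S xa ya m ⟨0, by omega⟩) = sclP S (Quotient.mk S (itv xa ya hxy))) ∧
    (∀ hl : i - 1 < i,
        tclP S (phi S xa ya m ⟨i - 1, hl⟩) = tclP S (Quotient.mk S (itv xa ya hxy))) ∧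
    (List.ofFn fun j : Fin i => ξ (phi S xa ya m j)).prod
      = ξ (Quotient.mk S (itv xa ya hxy)) := by
  refine ⟨?_, ?_, ?_, phi_prod S ξ hrule hi xa ya hxy m⟩
  · intro j₁ j₂ hj
    simp only [phi]
    rw [tclP_mk S hax2, sclP_mk S hax2]
    rw [show j₂.castSucc = j₁.succ from Fin.ext (by simp only [Fin.coe_castSucc, Fin.val_succ]; omega)]
  · intro h0
    simp only [phi]
    rw [sclP_mk S hax2, sclP_mk S hax2]
    rw [show ((⟨0, by omega⟩ : Fin i).castSucc : Fin (i + 1)) = 0 from Fin.ext (by simp)]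
    rw [m.2.2.1]
  · intro hl
    simp only [phi]
    rw [tclP_mk S hax2, tclP_mk S hax2]
    rw [show ((⟨i - 1, hl⟩ : Fin i).succ : Fin (i + 1)) = Fin.last i from
      Fin.ext (by simp [Fin.val_succ, Fin.val_last]; omega)]
    rw [m.2.2.2]

lemma phi_inj (S : Setoid (IntP P)) (hax1 : Ax1 S) (hax2 : Ax2 S) {i : ℕ}
    (xa ya : P) (hxy : xa ≤ ya)
    (m m' : {m : Fin (i + 1) → P // Monotone m ∧ m 0 = xa ∧ m (Fin.last i) = ya})
    (h : phi S xa ya m = phi S xa ya m') : m = m' := by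
  have hpc : ∀ j : Fin i,
      S.r (itv (m.val j.castSucc) (m.val j.succ) (m.2.1 (Fin.castSucc_lt_succ (i := j)).le))
        (itv (m'.val j.castSucc) (m'.val j.succ) (m'.2.1 (Fin.castSucc_lt_succ (i := j)).le)) :=
    fun j => Quotient.exact (congrFun h j)
  have hub : ∀ j : Fin (i + 1), xa ≤ m.val j := fun j =>
    m.2.2.1.symm.le.trans (m.2.1 (Fin.zero_le j))
  have hub' : ∀ j : Fin (i + 1), xa ≤ m'.val j := fun j =>
    m'.2.2.1.symm.le.trans (m'.2.1 (Fin.zero_le j))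
  have hlb : ∀ j : Fin (i + 1), m.val j ≤ ya := fun j =>
    (m.2.1 (Fin.le_last j)).trans m.2.2.2.le
  have hlb' : ∀ j : Fin (i + 1), m'.val j ≤ ya := fun j =>
    (m'.2.1 (Fin.le_last j)).trans m'.2.2.2.le
  have hpre : ∀ jv : ℕ, ∀ hjv : jv ≤ i,
      S.r (itv xa (m.val ⟨jv, by omega⟩) (hub _)) (itv xa (m'.val ⟨jv, by omega⟩) (hub' _)) := by
    intro jv
    induction jv with
    | zero =>
      intro _
      have e : m.val ⟨0, by omega⟩ = xa := by
        rw [show (⟨0, by omega⟩ : Fin (i + 1)) = 0 from Fin.ext (by simp)]; exact m.2.2.1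
      have e' : m'.val ⟨0, by omega⟩ = xa := by
        rw [show (⟨0, by omega⟩ : Fin (i + 1)) = 0 from Fin.ext (by simp)]; exact m'.2.2.1
      rw [show itv xa (m.val ⟨0, by omega⟩) (hub _) = itv xa xa le_rfl from itv_eq rfl e,
        show itv xa (m'.val ⟨0, by omega⟩) (hub' _) = itv xa xa le_rfl from itv_eq rfl e']
    | succ jv ih =>
      intro hjv
      exact hax1 xa (m.val ⟨jv, by omega⟩) (m.val ⟨jv + 1, by omega⟩)
        xa (m'.val ⟨jv, by omega⟩) (m'.val ⟨jv + 1, by omega⟩)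
        (hub _) (m.2.1 (Fin.mk_le_mk.mpr (Nat.le_succ jv)))
        (hub' _) (m'.2.1 (Fin.mk_le_mk.mpr (Nat.le_succ jv)))
        (ih (by omega)) (hpc ⟨jv, by omega⟩)
  have hsuf : ∀ dv : ℕ, ∀ jv : ℕ, ∀ hjd : jv + dv = i,
      S.r (itv (m.val ⟨jv, by omega⟩) ya (hlb _)) (itv (m'.val ⟨jv, by omega⟩) ya (hlb' _)) := by
    intro dv
    induction dv with
    | zero =>
      intro jv hjv
      have e : m.val ⟨jv, by omega⟩ = ya := by
        rw [show (⟨jv, by omega⟩ : Fin (i + 1)) = Fin.last i from Fin.ext (by simp; omega)]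
        exact m.2.2.2
      have e' : m'.val ⟨jv, by omega⟩ = ya := by
        rw [show (⟨jv, by omega⟩ : Fin (i + 1)) = Fin.last i from Fin.ext (by simp; omega)]
        exact m'.2.2.2
      rw [show itv (m.val ⟨jv, by omega⟩) ya (hlb _) = itv ya ya le_rfl from itv_eq e rfl,
        show itv (m'.val ⟨jv, by omega⟩) ya (hlb' _) = itv ya ya le_rfl from itv_eq e' rfl]
    | succ dv ih =>
      intro jv hjv
      exact hax1 (m.val ⟨jv, by omega⟩) (m.val ⟨jv + 1, by omega⟩) ya
        (m'.val ⟨jv, by omega⟩) (m'.val ⟨jv + 1, by omega⟩) ya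
        (m.2.1 (Fin.mk_le_mk.mpr (Nat.le_succ jv))) (hlb _)
        (m'.2.1 (Fin.mk_le_mk.mpr (Nat.le_succ jv))) (hlb' _)
        (hpc ⟨jv, by omega⟩) (ih (jv + 1) (by omega))
  apply Subtype.ext
  funext j
  have h1 : Quotient.mk S (itv xa (m.val j) (hub j)) =
      Quotient.mk S (itv xa (m'.val j) (hub' j)) :=
    Quotient.sound (hpre j.val (by omega))
  have h2 : Quotient.mk S (itv (m.val j) ya (hlb j)) =
      Quotient.mk S (itv (m'.val j) ya (hlb' j)) :=
    Quotient.sound (hsuf (i - j.val) j.val (by omega))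
  have := intMap_injective S hax2 hxy
    (z := ⟨m.val j, hub j, hlb j⟩) (z' := ⟨m'.val j, hub' j, hlb' j⟩) (Prod.ext h1 h2)
  exact congrArg Subtype.val this

lemma phi_surj (S : Setoid (IntP P)) (hax2 : Ax2 S)
    (k : Type) [Field k] (A : Type) [Ring A] [Algebra k A]
    (ξ : Module.Basis (Quotient S) k A) (hrule : MulRuleA S ⇑ξ) {i : ℕ} (hi : 1 ≤ i)
    (xa ya : P) (hxy : xa ≤ ya) (t : Fin i → Quotient S)
    (hprod : (List.ofFn fun j : Fin i => ξ (t j)).prod = ξ (Quotient.mk S (itv xa ya hxy))) :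
    ∃ m, phi S xa ya m = t := by
  classical
  set tt : ℕ → Quotient S :=
    fun l => if h : l < i then t ⟨l, h⟩ else Quotient.mk S (itv xa ya hxy) with htt
  have hbridge : prodTo (fun l => ξ (tt l)) i = ξ (Quotient.mk S (itv xa ya hxy)) := by
    rw [← ofFn_prod_eq_prodTo (fun l => ξ (tt l)) i, ← hprod]
    have hfun : (fun j : Fin i => ξ (tt j.val)) = fun j : Fin i => ξ (t j) := by
      funext j
      simp [htt, j.isLt]
    rw [hfun]
  rcases surj_aux S hax2 (⇑ξ) hrule tt i hi with h0 | ⟨a, b, hab, hch, hpe⟩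
  · rw [hbridge] at h0
    exact absurd h0 (ξ.ne_zero _)
  · have hmk : Quotient.mk S (itv a b hab) = Quotient.mk S (itv xa ya hxy) :=
      ξ.injective (by rw [← hpe, hbridge])
    have hch' : ChRe S tt i xa ya :=
      transport S hax2 i tt a b xa ya hab hxy (Quotient.exact hmk) hch
    obtain ⟨mm, hm0, hmi, hcl⟩ := hch'
    have hsteps : ∀ l, l < i → mm l ≤ mm (l + 1) := fun l hl => (hcl l hl).1
    refine ⟨⟨fun j => mm j.val, ?_, ?_, ?_⟩, ?_⟩
    · intro p q hpq
      exact chain_mono hsteps (hpq : (p : ℕ) ≤ (q : ℕ)) (Nat.lt_succ_iff.mp q.isLt)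
    · show mm ((0 : Fin (i + 1)) : ℕ) = xa
      rw [Fin.val_zero]; exact hm0
    · show mm ((Fin.last i : Fin (i + 1)) : ℕ) = ya
      rw [Fin.val_last]; exact hmi
    · funext j
      obtain ⟨hstep, he⟩ := hcl j.val j.isLt
      show Quotient.mk S (itv (mm (j.castSucc : ℕ)) (mm (j.succ : ℕ)) _) = t j
      refine (mk_itv_eq S (congrArg mm (Fin.coe_castSucc j))
        (congrArg mm (Fin.val_succ j)) (h' := hstep)).trans (he.trans ?_)
      simp [htt, j.isLt]

end Aux10

/-!
STATEMENT 10: Under Axioms 1–4, fix a class `α = [x(α), y(α)]∼` and `i ≥ 1`. The map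
`φ_α` sending a length-`i` multichain `x(α) = x₀ ≤ x₁ ≤ ⋯ ≤ xᵢ = y(α)` to the tuple
`([x₀,x₁]∼, …, [x_{i-1},xᵢ]∼)` is a bijection onto the set of `i`-tuples
`(α₁, …, αᵢ)` of classes with matching sources/targets (with the conventions
`α₀ := s(α)`, `α_{i+1} := t(α)`) and with `ξ_{α₁} ⋯ ξ_{αᵢ} = ξ_α` in `k[P]_red`.
-/
theorem multichains_biject_with_composable_tuples
    (P : Type) [PartialOrder P] (hIcc : ∀ x y : P, (Set.Icc x y).Finite)
    (S : Setoid (IntP P)) (hax1 : Ax1 S) (hax2 : Ax2 S) (hax3 : Ax3 S) (hax4 : Ax4 S)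
    (k : Type) [Field k] (A : Type) [Ring A] [Algebra k A]
    (ξ : Module.Basis (Quotient S) k A) (hrule : MulRuleA S ⇑ξ)
    (xa ya : P) (hxy : xa ≤ ya) (i : ℕ) (hi : 1 ≤ i) :
    ∃ e : {m : Fin (i + 1) → P // Monotone m ∧ m 0 = xa ∧ m (Fin.last i) = ya} ≃
        {t : Fin i → Quotient S //
          (∀ j₁ j₂ : Fin i, (j₁ : ℕ) + 1 = (j₂ : ℕ) → tclP S (t j₁) = sclP S (t j₂)) ∧
          (∀ h0 : 0 < i,
            sclP S (t ⟨0, h0⟩) = sclP S (Quotient.mk S (itv xa ya hxy))) ∧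
          (∀ hl : i - 1 < i,
            tclP S (t ⟨i - 1, hl⟩) = tclP S (Quotient.mk S (itv xa ya hxy))) ∧
          (List.ofFn fun j : Fin i => ξ (t j)).prod = ξ (Quotient.mk S (itv xa ya hxy))},
      ∀ (m : {m : Fin (i + 1) → P // Monotone m ∧ m 0 = xa ∧ m (Fin.last i) = ya})
        (j : Fin i),
        ((e m) : Fin i → Quotient S) j =
          Quotient.mk S (itv (m.val j.castSucc) (m.val j.succ)
            (m.2.1 (Fin.castSucc_lt_succ (i := j)).le)) := by
  classical
  have hmem := fun m : {m : Fin (i + 1) → P // Monotone m ∧ m 0 = xa ∧ m (Fin.last i) = ya} =>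
    Aux10.phi_mem S hax2 (⇑ξ) hrule hi xa ya hxy m
  refine ⟨Equiv.ofBijective
    (fun m => ⟨Aux10.phi S xa ya m, hmem m⟩) ⟨?_, ?_⟩, fun m j => rfl⟩
  · intro m m' hmm
    exact Aux10.phi_inj S hax1 hax2 xa ya hxy m m' (congrArg Subtype.val hmm)
  · intro t
    obtain ⟨m, hm⟩ := Aux10.phi_surj S hax2 k A ξ hrule hi xa ya hxy t.val t.2.2.2.2
    exact ⟨m, Subtype.ext hm⟩
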